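/- Let ψ be a real unit vector in ℝ^D, let E be a real D×D matrix with ‖E‖_op ≤ ε for some ε ≤ 1/4, and let T = ψψᵀ + E. Suppose v is a real unit vector and λ a real number with T v = λ v and λ ≥ 1 − ε. Define E' = T − λ vvᵀ. Then E' v = 0 and ‖E'‖_op ≤ (1 + √2) · ε. -/

import Mathlib

open scoped BigOperators
open scoped Matrix

/-- The Euclidean (ℓ²) operator norm of a real `D × D` matrix. -/
noncomputable def matOpNorm {D : ℕ} (A : Matrix (Fin D) (Fin D) ℝ) : ℝ :=
  ‖(Matrix.toEuclideanCLM (𝕜 := ℝ) A :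
      EuclideanSpace ℝ (Fin D) →L[ℝ] EuclideanSpace ℝ (Fin D))‖

private lemma vecMulVec_mulVec' {D : ℕ} (a b x : Fin D → ℝ) :
    (Matrix.vecMulVec a b).mulVec x = (b ⬝ᵥ x) • a := by
  funext i
  simp only [Matrix.mulVec, Matrix.vecMulVec_apply, dotProduct, Pi.smul_apply,
    smul_eq_mul, Matrix.of_apply]
  rw [Finset.sum_mul]
  exact Finset.sum_congr rfl fun j _ => by ring

private lemma mulVec_norm_le' {D : ℕ} (A : Matrix (Fin D) (Fin D) ℝ) (x : Fin D → ℝ) :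
    ‖(WithLp.equiv 2 (Fin D → ℝ)).symm (A.mulVec x)‖ ≤
      matOpNorm A * ‖(WithLp.equiv 2 (Fin D → ℝ)).symm x‖ := by
  have h := Matrix.toEuclideanCLM_toLp (𝕜 := ℝ) A x
  have h2 := (Matrix.toEuclideanCLM (𝕜 := ℝ) A).le_opNorm
    ((WithLp.equiv 2 (Fin D → ℝ)).symm x)
  rw [WithLp.equiv_symm_apply, h] at h2
  exact h2

private lemma euclid_norm_sq {D : ℕ} (x : Fin D → ℝ) :
    ‖(WithLp.equiv 2 (Fin D → ℝ)).symm x‖ ^ 2 = ∑ i, x i ^ 2 := by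
  rw [EuclideanSpace.norm_eq, Real.sq_sqrt (by positivity)]
  simp [Real.norm_eq_abs, sq_abs]

private lemma dot_le_norms {D : ℕ} (x y : Fin D → ℝ) :
    |x ⬝ᵥ y| ≤ ‖(WithLp.equiv 2 (Fin D → ℝ)).symm x‖ *
      ‖(WithLp.equiv 2 (Fin D → ℝ)).symm y‖ := by
  have h : x ⬝ᵥ y = inner ℝ ((WithLp.equiv 2 (Fin D → ℝ)).symm x)
      ((WithLp.equiv 2 (Fin D → ℝ)).symm y) := by
    simp [dotProduct, PiLp.inner_apply, RCLike.inner_apply, mul_comm]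
  rw [h]
  exact abs_real_inner_le_norm _ _

theorem stmt7 {D : ℕ} (ψ : Fin D → ℝ) (hψ : ∑ i, ψ i ^ 2 = 1)
    (E : Matrix (Fin D) (Fin D) ℝ) (ε : ℝ) (hεq : ε ≤ 1 / 4)
    (hE : matOpNorm E ≤ ε)
    (v : Fin D → ℝ) (hv : ∑ i, v i ^ 2 = 1)
    (lam : ℝ) (hTv : (Matrix.vecMulVec ψ ψ + E).mulVec v = lam • v)
    (hlam : 1 - ε ≤ lam) :
    (Matrix.vecMulVec ψ ψ + E - lam • Matrix.vecMulVec v v).mulVec v = 0 ∧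
    matOpNorm (Matrix.vecMulVec ψ ψ + E - lam • Matrix.vecMulVec v v) ≤
      (1 + Real.sqrt 2) * ε := by
  classical
  set e : (Fin D → ℝ) ≃ EuclideanSpace ℝ (Fin D) := (WithLp.equiv 2 (Fin D → ℝ)).symm with he
  have hε0 : 0 ≤ ε := le_trans (norm_nonneg _) hE
  have hvv : v ⬝ᵥ v = 1 := by
    simpa [dotProduct, pow_two] using hv
  set c : ℝ := ψ ⬝ᵥ v with hc
  have hTv' : c • ψ + E.mulVec v = lam • v := by
    rw [Matrix.add_mulVec, vecMulVec_mulVec'] at hTv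
    exact hTv
  -- Part 1: E' v = 0
  have part1 : (Matrix.vecMulVec ψ ψ + E - lam • Matrix.vecMulVec v v).mulVec v = 0 := by
    rw [Matrix.sub_mulVec, Matrix.add_mulVec, Matrix.smul_mulVec,
      vecMulVec_mulVec', vecMulVec_mulVec', hvv, one_smul]
    rw [← hc] at *
    rw [hTv']
    simp
  refine ⟨part1, ?_⟩
  -- norms of the unit vectors
  have hψn : ‖e ψ‖ = 1 := by
    have := euclid_norm_sq ψ
    rw [hψ] at this
    nlinarith [norm_nonneg (e ψ)]
  have hvn : ‖e v‖ = 1 := by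
    have := euclid_norm_sq v
    rw [hv] at this
    nlinarith [norm_nonneg (e v)]
  have hEx : ∀ x : Fin D → ℝ, ‖e (E.mulVec x)‖ ≤ ε * ‖e x‖ := by
    intro x
    calc ‖e (E.mulVec x)‖ ≤ matOpNorm E * ‖e x‖ := mulVec_norm_le' E x
    _ ≤ ε * ‖e x‖ := mul_le_mul_of_nonneg_right hE (norm_nonneg _)
  have hEvn : ‖e (E.mulVec v)‖ ≤ ε := by
    have := hEx v; rwa [hvn, mul_one] at this
  -- c² ≥ 1 - 2ε ≥ 1/2
  have hcψ : c • ψ = lam • v - E.mulVec v := by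
    rw [← hTv']; abel
  have hc2 : 1 / 2 ≤ c ^ 2 := by
    have h1 : (c • ψ) ⬝ᵥ v = c ^ 2 := by
      rw [smul_dotProduct, ← hc, smul_eq_mul, sq]
    have h2 : (lam • v - E.mulVec v) ⬝ᵥ v = lam - E.mulVec v ⬝ᵥ v := by
      rw [sub_dotProduct, smul_dotProduct, hvv, smul_eq_mul, mul_one]
    have h3 : |E.mulVec v ⬝ᵥ v| ≤ ε := by
      have := dot_le_norms (E.mulVec v) v
      rw [← he, hvn, mul_one] at this
      exact le_trans this hEvn
    rw [hcψ, h2] at h1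
    have := abs_le.mp h3
    nlinarith
  -- operator norm bound
  rw [matOpNorm]
  apply ContinuousLinearMap.opNorm_le_bound
  · positivity
  intro y
  set x : Fin D → ℝ := WithLp.equiv 2 (Fin D → ℝ) y with hx
  have hyx : e x = y := by simp [he, hx]
  set t : ℝ := v ⬝ᵥ x with ht
  set w : Fin D → ℝ := x - t • v with hw
  have hvw : v ⬝ᵥ w = 0 := by
    rw [hw, dotProduct_sub, dotProduct_smul, hvv, smul_eq_mul, mul_one, ← ht,
      sub_self]
  -- E' x = E' w
  set M : Matrix (Fin D) (Fin D) ℝ :=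
    Matrix.vecMulVec ψ ψ + E - lam • Matrix.vecMulVec v v with hM
  have hMx : M.mulVec x = M.mulVec w := by
    have : x = w + t • v := by rw [hw]; abel
    rw [this, Matrix.mulVec_add, Matrix.mulVec_smul, part1, smul_zero, add_zero]
  have hMw : M.mulVec w = (ψ ⬝ᵥ w) • ψ + E.mulVec w := by
    rw [hM, Matrix.sub_mulVec, Matrix.add_mulVec, Matrix.smul_mulVec,
      vecMulVec_mulVec', vecMulVec_mulVec', hvw, zero_smul, smul_zero, sub_zero]
  -- bound |ψ ⬝ᵥ w|
  have hcw : c * (ψ ⬝ᵥ w) = -(E.mulVec v ⬝ᵥ w) := by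
    have h1 : (c • ψ) ⬝ᵥ w = c * (ψ ⬝ᵥ w) := by
      rw [smul_dotProduct, smul_eq_mul]
    have h2 : (lam • v - E.mulVec v) ⬝ᵥ w = -(E.mulVec v ⬝ᵥ w) := by
      rw [sub_dotProduct, smul_dotProduct, hvw, smul_eq_mul, mul_zero, zero_sub]
    rw [← h1, hcψ, h2]
  have hEvw : |E.mulVec v ⬝ᵥ w| ≤ ε * ‖e w‖ := by
    have h := dot_le_norms (E.mulVec v) w
    rw [← he] at h
    exact le_trans h (mul_le_mul_of_nonneg_right hEvn (norm_nonneg _))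
  have hψw : |ψ ⬝ᵥ w| ≤ Real.sqrt 2 * ε * ‖e w‖ := by
    have hle : |c| * |ψ ⬝ᵥ w| ≤ ε * ‖e w‖ := by
      rw [← abs_mul, hcw, abs_neg]; exact hEvw
    have hs2 : Real.sqrt 2 ^ 2 = 2 := Real.sq_sqrt (by norm_num)
    have hs2' : (0:ℝ) ≤ Real.sqrt 2 := Real.sqrt_nonneg 2
    have hcabs : 1 ≤ Real.sqrt 2 * |c| := by
      have h1 : (1:ℝ) ≤ (Real.sqrt 2 * |c|) ^ 2 := by
        rw [mul_pow, hs2, sq_abs]; linarith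
      nlinarith [mul_nonneg hs2' (abs_nonneg c)]
    calc |ψ ⬝ᵥ w| = 1 * |ψ ⬝ᵥ w| := (one_mul _).symm
    _ ≤ (Real.sqrt 2 * |c|) * |ψ ⬝ᵥ w| :=
        mul_le_mul_of_nonneg_right hcabs (abs_nonneg _)
    _ = Real.sqrt 2 * (|c| * |ψ ⬝ᵥ w|) := by ring
    _ ≤ Real.sqrt 2 * (ε * ‖e w‖) := mul_le_mul_of_nonneg_left hle hs2'
    _ = Real.sqrt 2 * ε * ‖e w‖ := by ring
  -- ‖w‖ ≤ ‖x‖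
  have hwx : ‖e w‖ ≤ ‖e x‖ := by
    have h1 : ‖e w‖ ^ 2 = ∑ i, w i ^ 2 := euclid_norm_sq w
    have h2 : ‖e x‖ ^ 2 = ∑ i, x i ^ 2 := euclid_norm_sq x
    have h3 : ∑ i, w i ^ 2 = ∑ i, x i ^ 2 - t ^ 2 := by
      have expand : ∀ i, w i ^ 2 = x i ^ 2 - 2 * t * (v i * x i) + t ^ 2 * v i ^ 2 := by
        intro i
        rw [hw]
        simp only [Pi.sub_apply, Pi.smul_apply, smul_eq_mul]
        ring
      rw [Finset.sum_congr rfl fun i _ => expand i]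
      rw [Finset.sum_add_distrib, Finset.sum_sub_distrib, ← Finset.mul_sum, ← Finset.mul_sum, hv]
      have : ∑ i, v i * x i = t := by rw [ht]; rfl
      rw [this]; ring
    nlinarith [norm_nonneg (e w), norm_nonneg (e x), sq_nonneg t]
  -- put it together
  have key : ‖e (M.mulVec x)‖ ≤ (1 + Real.sqrt 2) * ε * ‖e x‖ := by
    rw [hMx, hMw]
    have hsplit : e ((ψ ⬝ᵥ w) • ψ + E.mulVec w) = (ψ ⬝ᵥ w) • e ψ + e (E.mulVec w) := by
      rw [he]
      rw [WithLp.equiv_symm_apply, WithLp.toLp_add, WithLp.toLp_smul]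
    rw [hsplit]
    calc ‖(ψ ⬝ᵥ w) • e ψ + e (E.mulVec w)‖
        ≤ ‖(ψ ⬝ᵥ w) • e ψ‖ + ‖e (E.mulVec w)‖ := norm_add_le _ _
    _ = |ψ ⬝ᵥ w| * ‖e ψ‖ + ‖e (E.mulVec w)‖ := by rw [norm_smul, Real.norm_eq_abs]
    _ ≤ Real.sqrt 2 * ε * ‖e w‖ * 1 + ε * ‖e w‖ := by
        rw [hψn]
        exact add_le_add (by simpa using hψw) (hEx w)
    _ = (1 + Real.sqrt 2) * ε * ‖e w‖ := by ring
    _ ≤ (1 + Real.sqrt 2) * ε * ‖e x‖ := by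
        apply mul_le_mul_of_nonneg_left hwx
        positivity
  have hclm : (Matrix.toEuclideanCLM (𝕜 := ℝ) M) y = e (M.mulVec x) := by
    rw [← hyx, he]
    rw [WithLp.equiv_symm_apply]
    simp [Matrix.toLin'_apply]
  rw [hclm, ← hyx]
  exact key
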